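/- There exists a sequence γ : ℕ → ℂ such that the Hankel matrix {γ_{j+k}}_{j,k≥0} belongs to the injective tensor product ℓ¹⊗̌ℓ¹ but ∑_{k=0}^∞ (1+k)|γ_k| = ∞; that is, the sum of the moduli of the matrix entries of this Hankel matrix is infinite. (Negative solution to Mazur's Problem 88.) -/

import Mathlib

open Filter Finset

/-- The Hankel matrix `{γ_{j+k}}` belongs to the injective tensor product `ℓ¹ ⊗̌ ℓ¹`:
the partial bilinear sums against sequences in the unit ball of `ℓ^∞` are uniformly bounded. -/
def HankelInInj (γ : ℕ → ℂ) : Prop :=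
  ∃ C : ℝ, ∀ (N : ℕ) (x y : ℕ → ℂ), (∀ j, ‖x j‖ ≤ 1) → (∀ k, ‖y k‖ ≤ 1) →
    ‖∑ j ∈ Finset.range (N + 1), ∑ k ∈ Finset.range (N + 1), γ (j + k) * x j * y k‖ ≤ C

namespace MazurAux

open Complex

noncomputable section

/-- `exp(2 π i d / n)`. -/
def en (n : ℕ) (d : ℤ) : ℂ := Complex.exp ((2 * Real.pi * d / n : ℝ) * Complex.I)

lemma en_add (n : ℕ) (a b : ℤ) : en n (a + b) = en n a * en n b := by
  rw [en, en, en, ← Complex.exp_add]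
  congr 1
  push_cast
  ring

lemma norm_en (n : ℕ) (d : ℤ) : ‖en n d‖ = 1 := by
  rw [en, Complex.norm_exp_ofReal_mul_I]

lemma conj_en (n : ℕ) (d : ℤ) : (starRingEnd ℂ) (en n d) = en n (-d) := by
  rw [en, en, ← Complex.exp_conj]
  congr 1
  simp only [map_mul, map_div₀, Complex.conj_ofReal, Complex.conj_I, map_ofNat,
    map_natCast, map_intCast]
  push_cast
  ring

lemma en_eq_one_of_dvd {n : ℕ} (hn : 0 < n) {d : ℤ} (h : (n : ℤ) ∣ d) : en n d = 1 := by
  obtain ⟨m, rfl⟩ := h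
  rw [en]
  have hne : (n : ℂ) ≠ 0 := by exact_mod_cast Nat.cast_ne_zero.mpr hn.ne'
  have : ((2 * Real.pi * ((n : ℤ) * m : ℤ) / n : ℝ) : ℂ) = (m : ℤ) * (2 * Real.pi) := by
    push_cast
    field_simp
  rw [this]
  have := Complex.exp_int_mul_two_pi_mul_I m
  rw [← this]
  congr 1
  push_cast
  ring

lemma dvd_of_en_eq_one {n : ℕ} (hn : 0 < n) {d : ℤ} (h : en n d = 1) : (n : ℤ) ∣ d := by
  rw [en, Complex.exp_eq_one_iff] at h
  obtain ⟨m, hm⟩ := h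
  have hI : ((2 * Real.pi * d / n : ℝ) : ℂ) = (m : ℂ) * (2 * Real.pi) := by
    have h2 : ((2 * Real.pi * d / n : ℝ) : ℂ) * Complex.I = ((m : ℂ) * (2 * Real.pi)) * Complex.I := by
      rw [hm]; ring
    exact mul_right_cancel₀ Complex.I_ne_zero h2
  have hR : (2 * Real.pi * d / n : ℝ) = m * (2 * Real.pi) := by
    exact_mod_cast hI
  have hne : (n : ℝ) ≠ 0 := by positivity
  have hpi : (2 * Real.pi) ≠ 0 := by positivity
  have h3 : (2 * Real.pi) * (d : ℝ) = (2 * Real.pi) * ((m : ℝ) * n) := by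
    field_simp at hR
    linear_combination (2 * Real.pi) * hR
  have h5 := mul_left_cancel₀ hpi h3
  have h4 : (d : ℝ) = ((n : ℤ) : ℝ) * (m : ℝ) := by push_cast; linarith [h5]
  exact ⟨m, by exact_mod_cast h4⟩

lemma en_pow (n : ℕ) (d : ℤ) (j : ℕ) : en n (d * j) = en n d ^ j := by
  rw [en, en, ← Complex.exp_nat_mul]
  congr 1
  push_cast
  ring

/-- Orthogonality of characters. -/
lemma en_ortho {n J : ℕ} (hn : 0 < n) (hJ : n ∣ J) (d : ℤ) :
    ∑ j ∈ range J, en n (d * j) = if (n : ℤ) ∣ d then (J : ℂ) else 0 := by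
  split_ifs with h
  · rw [Finset.sum_congr rfl (fun j _ => by rw [en_pow, en_eq_one_of_dvd hn h, one_pow])]
    simp
  · have h1 : en n d ≠ 1 := fun hc => h (dvd_of_en_eq_one hn hc)
    rw [Finset.sum_congr rfl (fun j _ => en_pow n d j), geom_sum_eq h1 J]
    have hJ1 : en n d ^ J = 1 := by
      rw [← en_pow, en_eq_one_of_dvd hn]
      exact Dvd.dvd.mul_left (Int.natCast_dvd_natCast.mpr hJ) d
    rw [hJ1]
    simp

/-- The Gauss-type square bound. -/
lemma square_bound {n J : ℕ} (hn : 0 < n) (hJ : n ∣ J) (u v : ℕ → ℂ)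
    (hu : ∀ j, ‖u j‖ ≤ 1) (hv : ∀ k, ‖v k‖ ≤ 1) :
    ‖∑ j ∈ range J, ∑ k ∈ range J, en n ((j : ℤ) * k) * u j * v k‖
      ≤ (J : ℝ) ^ 2 / Real.sqrt n := by
  obtain ⟨c, rfl⟩ := hJ
  set J := n * c with hJdef
  set w : ℕ → ℂ := fun j => ∑ k ∈ range J, en n ((j : ℤ) * k) * v k with hw
  set V : ℕ → ℂ := fun r => ∑ k ∈ (range J).filter (fun k => k % n = r), v k with hV
  -- w j as a sum over residues
  have hwr : ∀ j : ℕ, w j = ∑ r ∈ range n, en n ((j : ℤ) * r) * V r := by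
    intro j
    rw [hw]
    simp only
    rw [← Finset.sum_fiberwise_of_maps_to (fun k hk => Finset.mem_range.mpr (Nat.mod_lt k hn))
      (fun k => en n ((j : ℤ) * k) * v k)]
    refine Finset.sum_congr rfl fun r hr => ?_
    rw [hV]
    simp only
    rw [Finset.mul_sum]
    refine Finset.sum_congr rfl fun k hk => ?_
    obtain ⟨hk1, hk2⟩ := Finset.mem_filter.mp hk
    have hk3 : (k : ℤ) = (n : ℤ) * ((k / n : ℕ) : ℤ) + r := by
      exact_mod_cast (by rw [← hk2]; exact (Nat.div_add_mod k n).symm : k = n * (k / n) + r)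
    have : (j : ℤ) * k = (j : ℤ) * r + (n : ℤ) * ((j : ℤ) * (k / n : ℕ)) := by
      linear_combination (j : ℤ) * hk3
    rw [this, en_add, en_eq_one_of_dvd hn ⟨(j : ℤ) * (k / n : ℕ), rfl⟩, mul_one]
  -- Parseval-type identity
  have parseval : ∑ j ∈ range J, ‖w j‖ ^ 2 = (J : ℝ) * ∑ r ∈ range n, ‖V r‖ ^ 2 := by
    have key : ∑ j ∈ range J, (w j * (starRingEnd ℂ) (w j))
        = (J : ℂ) * ∑ r ∈ range n, (V r * (starRingEnd ℂ) (V r)) := by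
      have expand : ∀ j, w j * (starRingEnd ℂ) (w j)
          = ∑ r ∈ range n, ∑ r' ∈ range n,
              (V r * (starRingEnd ℂ) (V r')) * en n (((r : ℤ) - r') * j) := by
        intro j
        rw [hwr j, map_sum, Finset.sum_mul_sum]
        refine Finset.sum_congr rfl fun r hr => Finset.sum_congr rfl fun r' hr' => ?_
        rw [map_mul, conj_en]
        have : ((r : ℤ) - r') * j = (j : ℤ) * r + -((j : ℤ) * r') := by ring
        rw [this, en_add]
        ring
      rw [Finset.sum_congr rfl fun j _ => expand j]
      rw [Finset.sum_comm]
      have swap2 : ∀ r ∈ range n, ∑ j ∈ range J, ∑ r' ∈ range n,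
            (V r * (starRingEnd ℂ) (V r')) * en n (((r : ℤ) - r') * j)
          = ∑ r' ∈ range n, (V r * (starRingEnd ℂ) (V r'))
              * (if (n : ℤ) ∣ ((r : ℤ) - r') then (J : ℂ) else 0) := by
        intro r _
        rw [Finset.sum_comm]
        refine Finset.sum_congr rfl fun r' hr' => ?_
        rw [← Finset.mul_sum, en_ortho hn ⟨c, rfl⟩]
      rw [Finset.sum_congr rfl swap2]
      rw [Finset.mul_sum]
      refine Finset.sum_congr rfl fun r hr => ?_
      rw [Finset.sum_eq_single r (fun r' hr' hne => by
        have hnd : ¬ ((n : ℤ) ∣ ((r : ℤ) - r')) := by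
          intro hdvd
          have habs : |(r : ℤ) - r'| < n := by
            have h1 := Finset.mem_range.mp hr
            have h2 := Finset.mem_range.mp hr'
            rw [abs_lt]
            omega
          have h0 := Int.eq_zero_of_abs_lt_dvd hdvd habs
          have : (r : ℤ) = r' := by omega
          exact absurd (by exact_mod_cast this.symm : r' = r) hne
        simp [hnd]) (fun h => absurd hr h)]
      simp only [sub_self, dvd_zero, if_true]
      ring
    -- take real parts
    have cast1 : ((∑ j ∈ range J, ‖w j‖ ^ 2 : ℝ) : ℂ) = ∑ j ∈ range J, (w j * (starRingEnd ℂ) (w j)) := by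
      push_cast
      refine Finset.sum_congr rfl fun j _ => ?_
      rw [Complex.mul_conj']
    have cast2 : ((∑ r ∈ range n, ‖V r‖ ^ 2 : ℝ) : ℂ)
        = ∑ r ∈ range n, (V r * (starRingEnd ℂ) (V r)) := by
      push_cast
      refine Finset.sum_congr rfl fun r _ => ?_
      rw [Complex.mul_conj']
    have : ((∑ j ∈ range J, ‖w j‖ ^ 2 : ℝ) : ℂ) = (((J : ℝ) * ∑ r ∈ range n, ‖V r‖ ^ 2 : ℝ) : ℂ) := by
      rw [cast1, key, ← cast2]
      push_cast
      ring
    exact_mod_cast this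
  -- bound on V
  have hVb : ∀ r, ‖V r‖ ≤ (c : ℝ) := by
    intro r
    have hcard : ((range J).filter (fun k => k % n = r)).card ≤ c := by
      have : ∀ k ∈ (range J).filter (fun k => k % n = r), k / n ∈ range c := by
        intro k hk
        obtain ⟨hk1, hk2⟩ := Finset.mem_filter.mp hk
        rw [Finset.mem_range] at hk1 ⊢
        rw [Nat.div_lt_iff_lt_mul hn]
        exact hk1.trans_le (mul_comm n c).le
      refine (Finset.card_le_card_of_injOn (fun k => k / n) this ?_).trans (by simp)
      intro k1 hk1 k2 hk2 heq
      obtain ⟨_, h1⟩ := Finset.mem_filter.mp hk1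
      obtain ⟨_, h2⟩ := Finset.mem_filter.mp hk2
      have e1 := Nat.div_add_mod k1 n
      have e2 := Nat.div_add_mod k2 n
      simp only at heq
      have e3 : n * (k1 / n) = n * (k2 / n) := by rw [heq]
      omega
    calc ‖V r‖ ≤ ∑ k ∈ (range J).filter (fun k => k % n = r), ‖v k‖ := norm_sum_le _ _
      _ ≤ ∑ k ∈ (range J).filter (fun k => k % n = r), 1 :=
          Finset.sum_le_sum fun k _ => hv k
      _ = ((range J).filter (fun k => k % n = r)).card := by simp
      _ ≤ (c : ℝ) := by exact_mod_cast hcard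
  -- main chain
  have hmain : ∑ j ∈ range J, ∑ k ∈ range J, en n ((j : ℤ) * k) * u j * v k
      = ∑ j ∈ range J, u j * w j := by
    refine Finset.sum_congr rfl fun j _ => ?_
    rw [hw]
    simp only
    rw [Finset.mul_sum]
    exact Finset.sum_congr rfl fun k _ => by ring
  rw [hmain]
  have step1 : ‖∑ j ∈ range J, u j * w j‖ ≤ ∑ j ∈ range J, ‖w j‖ := by
    refine (norm_sum_le _ _).trans (Finset.sum_le_sum fun j _ => ?_)
    rw [norm_mul]
    calc ‖u j‖ * ‖w j‖ ≤ 1 * ‖w j‖ :=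
          mul_le_mul_of_nonneg_right (hu j) (norm_nonneg _)
      _ = ‖w j‖ := one_mul _
  have step2 : (∑ j ∈ range J, ‖w j‖) ^ 2 ≤ (J : ℝ) * ∑ j ∈ range J, ‖w j‖ ^ 2 := by
    have := Finset.sum_mul_sq_le_sq_mul_sq (range J) (fun _ => (1 : ℝ)) (fun j => ‖w j‖)
    simpa using this
  have step3 : (J : ℝ) * ∑ j ∈ range J, ‖w j‖ ^ 2 ≤ (J : ℝ) ^ 4 / n := by
    rw [parseval]
    have hsumV : ∑ r ∈ range n, ‖V r‖ ^ 2 ≤ (n : ℝ) * (c : ℝ) ^ 2 := by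
      calc ∑ r ∈ range n, ‖V r‖ ^ 2 ≤ ∑ r ∈ range n, (c : ℝ) ^ 2 :=
            Finset.sum_le_sum fun r _ => pow_le_pow_left₀ (norm_nonneg _) (hVb r) 2
        _ = (n : ℝ) * (c : ℝ) ^ 2 := by simp [mul_comm]
    have hJc : (J : ℝ) = (n : ℝ) * c := by exact_mod_cast rfl
    have hnpos : (0 : ℝ) < n := by exact_mod_cast hn
    calc (J : ℝ) * ((J : ℝ) * ∑ r ∈ range n, ‖V r‖ ^ 2)
        ≤ (J : ℝ) * ((J : ℝ) * ((n : ℝ) * (c : ℝ) ^ 2)) := by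
          have hJ0 : (0 : ℝ) ≤ (J : ℝ) := Nat.cast_nonneg _
          exact mul_le_mul_of_nonneg_left (mul_le_mul_of_nonneg_left hsumV hJ0) hJ0
      _ = (J : ℝ) ^ 4 / n := by
          rw [hJc]
          field_simp
  have hfinal : (∑ j ∈ range J, ‖w j‖) ^ 2 ≤ (J : ℝ) ^ 4 / n := le_trans step2 step3
  have hnn : (0 : ℝ) ≤ ∑ j ∈ range J, ‖w j‖ := Finset.sum_nonneg fun j _ => norm_nonneg _
  have hsqrtn : (0 : ℝ) < Real.sqrt n := Real.sqrt_pos.mpr (by exact_mod_cast hn)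
  have heq : (J : ℝ) ^ 4 / n = ((J : ℝ) ^ 2 / Real.sqrt n) ^ 2 := by
    rw [div_pow, Real.sq_sqrt (by positivity : (0:ℝ) ≤ (n:ℝ))]
    ring
  have hrhs : (0 : ℝ) ≤ (J : ℝ) ^ 2 / Real.sqrt n := by positivity
  have : ∑ j ∈ range J, ‖w j‖ ≤ (J : ℝ) ^ 2 / Real.sqrt n := by
    calc ∑ j ∈ range J, ‖w j‖ = Real.sqrt ((∑ j ∈ range J, ‖w j‖) ^ 2) :=
          (Real.sqrt_sq hnn).symm
      _ ≤ Real.sqrt ((J : ℝ) ^ 4 / n) := Real.sqrt_le_sqrt hfinal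
      _ = Real.sqrt (((J : ℝ) ^ 2 / Real.sqrt n) ^ 2) := by rw [← heq]
      _ = (J : ℝ) ^ 2 / Real.sqrt n := Real.sqrt_sq hrhs
  exact le_trans step1 this
lemma en_zero (n : ℕ) : en n 0 = 1 := by simp [en]

/-- Fourier coefficients of the indicator of `[M, 2M)` mod `P`. -/
def cco (P M u : ℕ) : ℂ := (P : ℂ)⁻¹ * ∑ t ∈ Ico M (2 * M), en P (-((u : ℤ) * t))

lemma cutoff_decomp {P M : ℕ} (hP : 0 < P) (hM : 2 * M ≤ P) {m : ℕ} (hm : m < P) :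
    (if M ≤ m ∧ m < 2 * M then (1 : ℂ) else 0)
      = ∑ u ∈ range P, cco P M u * en P ((u : ℤ) * m) := by
  have step1 : ∀ u : ℕ, cco P M u * en P ((u : ℤ) * m)
      = (P : ℂ)⁻¹ * ∑ t ∈ Ico M (2 * M), en P (((m : ℤ) - t) * u) := by
    intro u
    rw [cco, mul_assoc, Finset.sum_mul]
    congr 1
    refine Finset.sum_congr rfl fun t ht => ?_
    rw [← en_add]
    congr 1
    ring
  rw [Finset.sum_congr rfl fun u _ => step1 u, ← Finset.mul_sum, Finset.sum_comm]
  have step2 : ∀ t ∈ Ico M (2 * M), ∑ u ∈ range P, en P (((m : ℤ) - t) * u)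
      = if t = m then (P : ℂ) else 0 := by
    intro t ht
    rw [en_ortho hP dvd_rfl]
    obtain ⟨ht1, ht2⟩ := Finset.mem_Ico.mp ht
    congr 1
    simp only [eq_iff_iff]
    constructor
    · intro hdvd
      have habs : |(m : ℤ) - t| < P := by
        rw [abs_lt]; omega
      have := Int.eq_zero_of_abs_lt_dvd hdvd habs
      omega
    · intro h; rw [h]; simp
  rw [Finset.sum_congr rfl step2, Finset.sum_ite_eq' (Ico M (2 * M)) m fun _ => (P : ℂ)]
  have hPne : (P : ℂ) ≠ 0 := Nat.cast_ne_zero.mpr hP.ne'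
  by_cases hin : M ≤ m ∧ m < 2 * M
  · rw [if_pos hin, if_pos (Finset.mem_Ico.mpr hin), inv_mul_cancel₀ hPne]
  · rw [if_neg hin, if_neg (fun hc => hin (Finset.mem_Ico.mp hc)), mul_zero]

lemma norm_cco_le_one {P M : ℕ} (hP : 0 < P) (hM : 2 * M ≤ P) (u : ℕ) :
    ‖cco P M u‖ ≤ 1 := by
  rw [cco, norm_mul]
  have h1 : ‖∑ t ∈ Ico M (2 * M), en P (-((u : ℤ) * t))‖ ≤ M := by
    refine (norm_sum_le _ _).trans ?_
    rw [Finset.sum_congr rfl fun t _ => norm_en P _]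
    simp only [Finset.sum_const, Nat.card_Ico, nsmul_eq_mul, mul_one]
    have : 2 * M - M = M := by omega
    rw [this]
  calc ‖((P:ℂ))⁻¹‖ * ‖∑ t ∈ Ico M (2 * M), en P (-((u : ℤ) * t))‖
      ≤ ‖((P:ℂ))⁻¹‖ * M := mul_le_mul_of_nonneg_left h1 (norm_nonneg _)
    _ ≤ 1 := by
        rw [norm_inv, Complex.norm_natCast]
        have hPpos : (0:ℝ) < P := by exact_mod_cast hP
        rw [inv_mul_le_iff₀ hPpos]
        have : (M:ℝ) ≤ P := by exact_mod_cast le_trans (by omega : M ≤ 2*M) hM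
        linarith

lemma norm_exp_mul_I_sub_one (r : ℝ) :
    ‖Complex.exp ((r : ℂ) * Complex.I) - 1‖ = 2 * |Real.sin (r / 2)| := by
  have hre : (Complex.exp ((r : ℂ) * Complex.I) - 1).re = Real.cos r - 1 := by
    rw [Complex.sub_re, Complex.exp_ofReal_mul_I_re, Complex.one_re]
  have him : (Complex.exp ((r : ℂ) * Complex.I) - 1).im = Real.sin r := by
    rw [Complex.sub_im, Complex.exp_ofReal_mul_I_im, Complex.one_im, sub_zero]
  rw [Complex.norm_def, Complex.normSq_apply, hre, him]
  rw [Real.abs_sin_half]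
  have hsq : (2 * Real.sqrt ((1 - Real.cos r) / 2)) ^ 2
      = (Real.cos r - 1) * (Real.cos r - 1) + Real.sin r * Real.sin r := by
    rw [mul_pow, Real.sq_sqrt (by nlinarith [Real.cos_le_one r] : (0:ℝ) ≤ (1 - Real.cos r) / 2)]
    nlinarith [Real.sin_sq_add_cos_sq r]
  rw [← hsq, Real.sqrt_sq (by positivity)]

lemma norm_en_sub_one {P u : ℕ} (hP : 0 < P) (hu1 : 1 ≤ u) (huP : u < P) :
    4 * (min u (P - u) : ℝ) / P ≤ ‖en P (-(u : ℤ)) - 1‖ := by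
  have hPpos : (0:ℝ) < P := by exact_mod_cast hP
  have hform : ‖en P (-(u : ℤ)) - 1‖ = 2 * |Real.sin (Real.pi * u / P)| := by
    rw [en]
    rw [norm_exp_mul_I_sub_one]
    congr 1
    have harg : (2 * Real.pi * ((-(u : ℤ) : ℤ) : ℝ) / P / 2) = -(Real.pi * u / P) := by
      push_cast; ring
    rw [harg, Real.sin_neg, abs_neg]
  rw [hform]
  have hPR : (0:ℝ) < P := hPpos
  have haP : (u:ℝ) ≤ P := by exact_mod_cast huP.le
  have hb : ((P - u : ℕ) : ℝ) = (P : ℝ) - u := by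
    rw [Nat.cast_sub huP.le]
  have hmin : ((min u (P - u) : ℕ) : ℝ) = min (u : ℝ) ((P:ℝ) - u) := by
    rw [Nat.cast_min, hb]
  have hsin_nonneg : 0 ≤ Real.sin (Real.pi * u / P) := by
    apply Real.sin_nonneg_of_nonneg_of_le_pi
    · positivity
    · rw [div_le_iff₀ hPR]
      have h1 : (1:ℝ) ≤ u := by exact_mod_cast hu1
      nlinarith [Real.pi_pos]
  rw [_root_.abs_of_nonneg hsin_nonneg]
  by_cases hcase : 2 * u ≤ P
  · have hc : (2:ℝ) * u ≤ P := by exact_mod_cast hcase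
    have hle : Real.pi * u / P ≤ Real.pi / 2 := by
      rw [div_le_div_iff₀ hPR (by norm_num : (0:ℝ) < 2)]
      nlinarith [Real.pi_pos]
    have := Real.mul_le_sin (x := Real.pi * u / P) (by positivity) hle
    have heq : 2 / Real.pi * (Real.pi * u / P) = 2 * u / P := by
      field_simp
    rw [heq] at this
    have hminle : min (u:ℝ) ((P:ℝ) - u) ≤ u := min_le_left _ _
    rw [div_le_iff₀ hPR] at this ⊢
    nlinarith [this, hminle]
  · push_neg at hcase
    have hc : (P:ℝ) < 2 * u := by exact_mod_cast hcase
    have hxeq : Real.pi * u / P = Real.pi - Real.pi * ((P:ℝ) - u) / P := by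
      field_simp
      ring
    rw [hxeq, Real.sin_pi_sub]
    have hle : Real.pi * ((P:ℝ) - u) / P ≤ Real.pi / 2 := by
      rw [div_le_div_iff₀ hPR (by norm_num : (0:ℝ) < 2)]
      nlinarith [Real.pi_pos]
    have hx0 : (0:ℝ) ≤ Real.pi * ((P:ℝ) - u) / P := by
      have : (0:ℝ) ≤ (P:ℝ) - u := by linarith
      positivity
    have := Real.mul_le_sin hx0 hle
    have heq : 2 / Real.pi * (Real.pi * ((P:ℝ) - u) / P) = 2 * ((P:ℝ) - u) / P := by
      field_simp
    rw [heq] at this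
    have hminle : min (u:ℝ) ((P:ℝ) - u) ≤ (P:ℝ) - u := min_le_right _ _
    rw [div_le_iff₀ hPR] at this ⊢
    nlinarith [this, hminle]


lemma norm_cco_le {P M u : ℕ} (hP : 0 < P) (hu1 : 1 ≤ u) (huP : u < P) :
    ‖cco P M u‖ ≤ 1 / (2 * (u : ℝ)) + 1 / (2 * ((P - u : ℕ) : ℝ)) := by
  set z := en P (-(u : ℤ)) with hz
  have hz1 : z ≠ 1 := by
    intro hc
    have hdvd := dvd_of_en_eq_one hP hc
    have habs : |(-(u : ℤ))| < P := by
      rw [abs_neg, _root_.abs_of_nonneg (by positivity : (0:ℤ) ≤ (u:ℤ))]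
      exact_mod_cast huP
    have := Int.eq_zero_of_abs_lt_dvd hdvd habs
    omega
  have hpow : ∀ t : ℕ, en P (-((u : ℤ) * t)) = z ^ t := by
    intro t
    rw [hz, ← en_pow]
    congr 1
    ring
  have hgeom : ∑ t ∈ Ico M (2 * M), en P (-((u : ℤ) * t))
      = (z ^ (2 * M) - z ^ M) / (z - 1) := by
    rw [Finset.sum_congr rfl fun t _ => hpow t]
    exact geom_sum_Ico hz1 (by omega)
  have hnormz : ∀ k : ℕ, ‖z ^ k‖ = 1 := fun k => by rw [norm_pow, hz, norm_en, one_pow]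
  have hzn : ‖z - 1‖ ≠ 0 := by
    simp only [ne_eq, norm_eq_zero, sub_eq_zero]
    exact hz1
  have hnum : ‖z ^ (2 * M) - z ^ M‖ ≤ 2 := by
    calc ‖z ^ (2 * M) - z ^ M‖ ≤ ‖z ^ (2 * M)‖ + ‖z ^ M‖ := norm_sub_le _ _
      _ = 2 := by rw [hnormz, hnormz]; norm_num
  have hPpos : (0:ℝ) < P := by exact_mod_cast hP
  have h1 : (0:ℝ) < (u:ℝ) := by exact_mod_cast hu1
  have h2 : (0:ℝ) < (P:ℝ) - u := by
    have : (u:ℝ) < P := by exact_mod_cast huP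
    linarith
  have hminR : (0:ℝ) < min (u:ℝ) ((P:ℝ) - u) := lt_min h1 h2
  have hlow := norm_en_sub_one hP hu1 huP
  have hlowpos : (0:ℝ) < 4 * (min (u:ℝ) ((P:ℝ) - u)) / P := by
    apply div_pos _ hPpos
    nlinarith [hminR]
  have hb : ((P - u : ℕ) : ℝ) = (P:ℝ) - u := by rw [Nat.cast_sub huP.le]
  have hlow' : 4 * (min (u:ℝ) ((P:ℝ) - u)) / P ≤ ‖z - 1‖ := by
    have : ((min u (P - u) : ℕ) : ℝ) = min (u:ℝ) ((P:ℝ) - u) := by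
      rw [Nat.cast_min, hb]
    calc 4 * (min (u:ℝ) ((P:ℝ) - u)) / P ≤ ‖en P (-(u:ℤ)) - 1‖ := by
          convert hlow using 3 <;> rw [Nat.cast_min, hb]
      _ = ‖z - 1‖ := by rw [hz]
  have hzlow : (0:ℝ) < ‖z - 1‖ := lt_of_lt_of_le hlowpos hlow'
  have hbound : ‖cco P M u‖ ≤ 1 / (2 * min (u:ℝ) ((P:ℝ) - u)) := by
    rw [cco, norm_mul, hgeom, norm_div]
    calc ‖((P:ℂ))⁻¹‖ * (‖z ^ (2*M) - z ^ M‖ / ‖z - 1‖)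
        ≤ (P:ℝ)⁻¹ * (2 / (4 * (min (u:ℝ) ((P:ℝ) - u)) / P)) := by
          rw [norm_inv, Complex.norm_natCast]
          refine mul_le_mul_of_nonneg_left ?_ (by positivity)
          exact div_le_div₀ (by norm_num : (0:ℝ) ≤ 2) hnum hlowpos hlow'
      _ = 1 / (2 * min (u:ℝ) ((P:ℝ) - u)) := by
          field_simp
          ring
  refine hbound.trans ?_
  rw [hb]
  rcases le_total (u:ℝ) ((P:ℝ) - u) with hm | hm
  · rw [min_eq_left hm]
    have : (0:ℝ) ≤ 1 / (2 * ((P:ℝ) - u)) := by positivity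
    linarith
  · rw [min_eq_right hm]
    have : (0:ℝ) ≤ 1 / (2 * (u : ℝ)) := by positivity
    linarith

lemma sum_norm_cco {P M : ℕ} (hP : 2 ≤ P) (hM : 2 * M ≤ P) :
    ∑ u ∈ range P, ‖cco P M u‖ ≤ 2 + Real.log P := by
  have hP0 : 0 < P := by omega
  rw [Finset.range_eq_Ico, Finset.sum_eq_sum_Ico_succ_bot hP0]
  have h0 : ‖cco P M 0‖ ≤ 1 := norm_cco_le_one hP0 hM 0
  have hrefl : ∑ u ∈ Ico 1 P, (1 : ℝ) / (2 * ((P - u : ℕ) : ℝ))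
      = ∑ u ∈ Ico 1 P, (1 : ℝ) / (2 * (u : ℝ)) := by
    refine Finset.sum_nbij' (fun u => P - u) (fun u => P - u) ?_ ?_ ?_ ?_ ?_ <;>
      intro a ha <;> simp only [Finset.mem_Ico] at ha ⊢ <;>
      first
        | omega
        | (congr 2; omega)
        | (congr 3; omega)
  have hharm : ∑ u ∈ Ico 1 P, (1 : ℝ) / (u : ℝ) = (harmonic (P - 1) : ℝ) := by
    rw [show P = (P - 1) + 1 by omega, Finset.Ico_add_one_right_eq_Icc, harmonic_eq_sum_Icc]
    push_cast
    refine Finset.sum_congr rfl fun u hu => ?_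
    rw [one_div]
  have hsum1 : ∑ u ∈ Ico 1 P, ‖cco P M u‖
      ≤ ∑ u ∈ Ico 1 P, ((1:ℝ) / (2 * (u:ℝ)) + 1 / (2 * ((P - u : ℕ) : ℝ))) := by
    refine Finset.sum_le_sum fun u hu => ?_
    rw [Finset.mem_Ico] at hu
    exact norm_cco_le hP0 hu.1 hu.2
  have hsum2 : ∑ u ∈ Ico 1 P, ((1:ℝ) / (2 * (u:ℝ)) + 1 / (2 * ((P - u : ℕ) : ℝ)))
      = ∑ u ∈ Ico 1 P, (1:ℝ) / (u : ℝ) := by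
    rw [Finset.sum_add_distrib, hrefl, ← Finset.sum_add_distrib]
    refine Finset.sum_congr rfl fun u hu => ?_
    rw [Finset.mem_Ico] at hu
    have hu0 : ((u:ℝ)) ≠ 0 := by
      have : (0:ℝ) < (u:ℝ) := by exact_mod_cast hu.1
      exact ne_of_gt this
    field_simp
    norm_num
  have hlog : (harmonic (P - 1) : ℝ) ≤ 1 + Real.log P := by
    refine (harmonic_le_one_add_log (P - 1)).trans ?_
    have h1 : (1:ℝ) ≤ ((P - 1 : ℕ) : ℝ) := by
      have : 1 ≤ P - 1 := by omega
      exact_mod_cast this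
    have h2 : ((P - 1 : ℕ) : ℝ) ≤ (P : ℝ) := by
      have : P - 1 ≤ P := by omega
      exact_mod_cast this
    have := Real.log_le_log (by linarith) h2
    linarith
  calc ‖cco P M 0‖ + ∑ u ∈ Ico 1 P, ‖cco P M u‖
      ≤ 1 + ((harmonic (P - 1) : ℝ)) := by
        rw [← hharm]
        exact add_le_add h0 (by rw [← hsum2]; exact hsum1)
    _ ≤ 2 + Real.log P := by rw [hharm] at *; linarith

/-- quadratic phase -/
def eπ (s m : ℕ) : ℂ := Complex.exp ((Real.pi * m ^ 2 / 4 ^ s : ℝ) * Complex.I)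

lemma norm_eπ (s m : ℕ) : ‖eπ s m‖ = 1 := by
  rw [eπ, Complex.norm_exp_ofReal_mul_I]

lemma eπ_fact (s j k : ℕ) :
    eπ s (j + k) = eπ s j * eπ s k * en (4 ^ s) ((j : ℤ) * k) := by
  rw [eπ, eπ, eπ, en, ← Complex.exp_add, ← Complex.exp_add]
  congr 1
  push_cast
  have h4 : ((4 : ℂ) ^ s) ≠ 0 := pow_ne_zero s (by norm_num)
  field_simp
  ring

def amp (s : ℕ) : ℝ := ((16 : ℝ) ^ s * s)⁻¹

def γb (s m : ℕ) : ℂ :=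
  if 1 ≤ s ∧ 4 ^ s ≤ m ∧ m < 2 * 4 ^ s then ((amp s : ℝ) : ℂ) * eπ s m else 0

def γγ (m : ℕ) : ℂ := γb (Nat.log 4 m) m

lemma arith_bound (s : ℕ) (hs : 1 ≤ s) :
    amp s * ((((2 * 4 ^ s : ℕ) : ℝ)) ^ 2 / Real.sqrt (((4 ^ s : ℕ) : ℝ)))
        * (2 + Real.log (((4 * 4 ^ s : ℕ) : ℝ))) ≤ 64 * (1 / 2 : ℝ) ^ s := by
  have hcast1 : (((2 * 4 ^ s : ℕ) : ℝ)) = 2 * (4 : ℝ) ^ s := by push_cast; ring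
  have hcast2 : (((4 ^ s : ℕ) : ℝ)) = (4 : ℝ) ^ s := by push_cast; ring
  have hcast3 : (((4 * 4 ^ s : ℕ) : ℝ)) = 4 * (4 : ℝ) ^ s := by push_cast; ring
  rw [hcast1, hcast2, hcast3]
  set σ : ℝ := (s : ℝ) with hσdef
  have hσ1 : (1 : ℝ) ≤ σ := by rw [hσdef]; exact_mod_cast hs
  have hσ0 : (0 : ℝ) < σ := by linarith
  set t : ℝ := (2 : ℝ) ^ s with htdef
  have ht : (0 : ℝ) < t := by positivity
  have h4t : (4 : ℝ) ^ s = t ^ 2 := by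
    rw [htdef, show (4 : ℝ) = 2 ^ 2 by norm_num, ← pow_mul, ← pow_mul, mul_comm]
  have h16t : (16 : ℝ) ^ s = t ^ 4 := by
    rw [htdef, show (16 : ℝ) = 2 ^ 4 by norm_num, ← pow_mul, ← pow_mul, mul_comm]
  have hsqrt : Real.sqrt ((4 : ℝ) ^ s) = t := by
    rw [h4t, Real.sqrt_sq ht.le]
  have hlog : Real.log (4 * (4 : ℝ) ^ s) = (σ + 1) * Real.log 4 := by
    rw [show (4 : ℝ) * 4 ^ s = 4 ^ (s + 1) by ring, Real.log_pow]
    push_cast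
    ring
  have hL0 : (0 : ℝ) ≤ Real.log 4 := Real.log_nonneg (by norm_num)
  have hL15 : Real.log 4 ≤ 3 / 2 := by
    rw [show (4 : ℝ) = 2 ^ 2 by norm_num, Real.log_pow]
    have := Real.log_two_lt_d9
    push_cast
    nlinarith
  rw [hsqrt, hlog, amp, h16t]
  set L : ℝ := Real.log 4
  have hsq : (2 * (4 : ℝ) ^ s) ^ 2 = 4 * t ^ 4 := by
    rw [h4t]; ring
  rw [hsq]
  have key : 4 * (2 + (σ + 1) * L) ≤ 64 * σ := by nlinarith
  have ht4 : (0 : ℝ) < t ^ 4 := by positivity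
  have hhalf : (1 / 2 : ℝ) ^ s = 1 / t := by
    rw [htdef, div_pow, one_pow]
  rw [hhalf]
  calc (t ^ 4 * σ)⁻¹ * (4 * t ^ 4 / t) * (2 + (σ + 1) * L)
      = (4 * (2 + (σ + 1) * L)) / (σ * t) := by
        field_simp
    _ ≤ (64 * σ) / (σ * t) := by
        exact div_le_div₀ (by positivity) key (by positivity) le_rfl
    _ = 64 * (1 / t) := by
        field_simp

lemma blockBound (s N : ℕ) (x y : ℕ → ℂ) (hx : ∀ j, ‖x j‖ ≤ 1) (hy : ∀ k, ‖y k‖ ≤ 1) :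
    ‖∑ j ∈ range (N + 1), ∑ k ∈ range (N + 1), γb s (j + k) * x j * y k‖
      ≤ 64 * (1 / 2 : ℝ) ^ s := by
  rcases Nat.eq_zero_or_pos s with hs0 | hs
  · subst hs0
    have hz : ∀ j k : ℕ, γb 0 (j + k) = 0 := fun j k => by simp [γb]
    simp only [hz, zero_mul, Finset.sum_const_zero, norm_zero]
    positivity
  -- notation
  have h4pos : 0 < 4 ^ s := pow_pos (by norm_num) s
  have hnpos : 0 < 4 ^ s := h4pos
  have hPpos : 0 < 4 * 4 ^ s := by omega
  have hP2 : 2 ≤ 4 * 4 ^ s := by omega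
  have hMP : 2 * 4 ^ s ≤ 4 * 4 ^ s := by omega
  set J := 2 * 4 ^ s with hJdef
  set P := 4 * 4 ^ s with hPdef
  set x' : ℕ → ℂ := fun j => if j ≤ N then x j else 0 with hx'def
  set y' : ℕ → ℂ := fun k => if k ≤ N then y k else 0 with hy'def
  have hx'b : ∀ j, ‖x' j‖ ≤ 1 := fun j => by
    rw [hx'def]; dsimp only; split_ifs; exacts [hx j, by simp]
  have hy'b : ∀ k, ‖y' k‖ ≤ 1 := fun k => by
    rw [hy'def]; dsimp only; split_ifs; exacts [hy k, by simp]
  have hγb0 : ∀ m : ℕ, J ≤ m → γb s m = 0 := by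
    intro m hm
    rw [γb, if_neg]
    rintro ⟨-, -, h⟩
    omega
  set R := max (N + 1) J with hRdef
  have hNR : range (N + 1) ⊆ range R := Finset.range_subset_range.mpr (le_max_left _ _)
  have hJR : range J ⊆ range R := Finset.range_subset_range.mpr (le_max_right _ _)
  -- step 1 : replace x by x'
  have e1 : ∑ j ∈ range (N + 1), ∑ k ∈ range (N + 1), γb s (j + k) * x j * y k
      = ∑ j ∈ range (N + 1), ∑ k ∈ range (N + 1), γb s (j + k) * x' j * y' k := by
    refine Finset.sum_congr rfl fun j hj => Finset.sum_congr rfl fun k hk => ?_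
    rw [Finset.mem_range] at hj hk
    rw [hx'def, hy'def]
    dsimp only
    rw [if_pos (by omega), if_pos (by omega)]
  -- step 2 : extend to R
  have e2 : ∑ j ∈ range (N + 1), ∑ k ∈ range (N + 1), γb s (j + k) * x' j * y' k
      = ∑ j ∈ range R, ∑ k ∈ range R, γb s (j + k) * x' j * y' k := by
    have inner : ∀ j : ℕ, ∑ k ∈ range (N + 1), γb s (j + k) * x' j * y' k
        = ∑ k ∈ range R, γb s (j + k) * x' j * y' k := by
      intro j
      refine Finset.sum_subset hNR fun k _ hk => ?_
      rw [Finset.mem_range, not_lt] at hk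
      have : y' k = 0 := by rw [hy'def]; dsimp only; rw [if_neg (by omega)]
      rw [this, mul_zero]
    rw [Finset.sum_congr rfl fun j _ => inner j]
    refine Finset.sum_subset hNR fun j _ hj => ?_
    rw [Finset.mem_range, not_lt] at hj
    have : x' j = 0 := by rw [hx'def]; dsimp only; rw [if_neg (by omega)]
    refine Finset.sum_eq_zero fun k _ => by rw [this, mul_zero, zero_mul]
  -- step 3 : restrict to J
  have e3 : ∑ j ∈ range R, ∑ k ∈ range R, γb s (j + k) * x' j * y' k
      = ∑ j ∈ range J, ∑ k ∈ range J, γb s (j + k) * x' j * y' k := by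
    have inner : ∀ j : ℕ, ∑ k ∈ range J, γb s (j + k) * x' j * y' k
        = ∑ k ∈ range R, γb s (j + k) * x' j * y' k := by
      intro j
      refine Finset.sum_subset hJR fun k _ hk => ?_
      rw [Finset.mem_range, not_lt] at hk
      rw [hγb0 (j + k) (by omega), zero_mul, zero_mul]
    rw [← Finset.sum_congr rfl fun j _ => inner j]
    refine (Finset.sum_subset hJR fun j _ hj => ?_).symm
    rw [Finset.mem_range, not_lt] at hj
    refine Finset.sum_eq_zero fun k _ => ?_
    rw [hγb0 (j + k) (by omega), zero_mul, zero_mul]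
  rw [e1, e2, e3]
  -- step 4 : cutoff decomposition pointwise
  have key : ∀ j ∈ range J, ∀ k ∈ range J, γb s (j + k) * x' j * y' k
      = ∑ u ∈ range P, (((amp s : ℝ) : ℂ) * cco P (4 ^ s) u) *
          (en (4 ^ s) ((j : ℤ) * k) * (eπ s j * en P ((u : ℤ) * j) * x' j)
            * (eπ s k * en P ((u : ℤ) * k) * y' k)) := by
    intro j hj k hk
    rw [Finset.mem_range] at hj hk
    have hmP : j + k < P := by omega
    have h1 : γb s (j + k)
        = (if 4 ^ s ≤ j + k ∧ j + k < 2 * 4 ^ s then (1 : ℂ) else 0)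
            * (((amp s : ℝ) : ℂ) * eπ s (j + k)) := by
      rw [γb]
      by_cases h : 4 ^ s ≤ j + k ∧ j + k < 2 * 4 ^ s
      · rw [if_pos ⟨hs, h.1, h.2⟩, if_pos h, one_mul]
      · rw [if_neg (fun hc => h ⟨hc.2.1, hc.2.2⟩), if_neg h, zero_mul]
    rw [h1, cutoff_decomp hPpos hMP hmP, Finset.sum_mul, Finset.sum_mul, Finset.sum_mul]
    refine Finset.sum_congr rfl fun u _ => ?_
    have e2' : en P ((u : ℤ) * ((j + k : ℕ) : ℤ)) = en P ((u : ℤ) * j) * en P ((u : ℤ) * k) := by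
      rw [← en_add]; congr 1; push_cast; ring
    rw [e2', eπ_fact s j k]
    ring
  rw [Finset.sum_congr rfl fun j hj => Finset.sum_congr rfl fun k hk => key j hj k hk]
  rw [Finset.sum_congr rfl fun j (_ : j ∈ range J) => Finset.sum_comm, Finset.sum_comm]
  have factor : ∀ u ∈ range P, ∑ j ∈ range J, ∑ k ∈ range J,
        (((amp s : ℝ) : ℂ) * cco P (4 ^ s) u) *
          (en (4 ^ s) ((j : ℤ) * k) * (eπ s j * en P ((u : ℤ) * j) * x' j)
            * (eπ s k * en P ((u : ℤ) * k) * y' k))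
      = (((amp s : ℝ) : ℂ) * cco P (4 ^ s) u) *
          ∑ j ∈ range J, ∑ k ∈ range J,
            en (4 ^ s) ((j : ℤ) * k) * (eπ s j * en P ((u : ℤ) * j) * x' j)
              * (eπ s k * en P ((u : ℤ) * k) * y' k) := by
    intro u _
    rw [Finset.mul_sum]
    refine Finset.sum_congr rfl fun j _ => ?_
    rw [Finset.mul_sum]
  rw [Finset.sum_congr rfl factor]
  -- step 5 : norm bound
  have hampnn : 0 ≤ amp s := by
    rw [amp]
    positivity
  have hJn : (4 ^ s : ℕ) ∣ J := ⟨2, by rw [hJdef]; ring⟩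
  have hSq : ∀ u : ℕ, ‖∑ j ∈ range J, ∑ k ∈ range J,
        en (4 ^ s) ((j : ℤ) * k) * (eπ s j * en P ((u : ℤ) * j) * x' j)
          * (eπ s k * en P ((u : ℤ) * k) * y' k)‖ ≤ (J : ℝ) ^ 2 / Real.sqrt ((4 ^ s : ℕ) : ℝ) := by
    intro u
    refine square_bound hnpos hJn _ _ (fun j => ?_) (fun k => ?_)
    · rw [norm_mul, norm_mul, norm_eπ, norm_en, one_mul, one_mul]
      exact hx'b j
    · rw [norm_mul, norm_mul, norm_eπ, norm_en, one_mul, one_mul]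
      exact hy'b k
  calc ‖∑ u ∈ range P, (((amp s : ℝ) : ℂ) * cco P (4 ^ s) u) *
          ∑ j ∈ range J, ∑ k ∈ range J,
            en (4 ^ s) ((j : ℤ) * k) * (eπ s j * en P ((u : ℤ) * j) * x' j)
              * (eπ s k * en P ((u : ℤ) * k) * y' k)‖
      ≤ ∑ u ∈ range P, amp s * ‖cco P (4 ^ s) u‖ * ((J : ℝ) ^ 2 / Real.sqrt ((4 ^ s : ℕ) : ℝ)) := by
        refine (norm_sum_le _ _).trans (Finset.sum_le_sum fun u _ => ?_)
        rw [norm_mul, norm_mul, Complex.norm_real, Real.norm_eq_abs, _root_.abs_of_nonneg hampnn,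
          mul_assoc]
        rw [mul_assoc]
        refine mul_le_mul_of_nonneg_left ?_ hampnn
        exact mul_le_mul_of_nonneg_left (hSq u) (norm_nonneg _)
    _ = amp s * ((J : ℝ) ^ 2 / Real.sqrt ((4 ^ s : ℕ) : ℝ)) * ∑ u ∈ range P, ‖cco P (4 ^ s) u‖ := by
        rw [Finset.mul_sum]
        refine Finset.sum_congr rfl fun u _ => by ring
    _ ≤ amp s * ((J : ℝ) ^ 2 / Real.sqrt ((4 ^ s : ℕ) : ℝ)) * (2 + Real.log P) := by
        refine mul_le_mul_of_nonneg_left (sum_norm_cco hP2 hMP) ?_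
        have : (0:ℝ) ≤ (J : ℝ) ^ 2 / Real.sqrt ((4 ^ s : ℕ) : ℝ) := by positivity
        exact mul_nonneg hampnn this
    _ ≤ 64 * (1 / 2 : ℝ) ^ s := arith_bound s hs

lemma two_pow_lt {s : ℕ} : 2 * 4 ^ s < 4 ^ (s + 1) := by
  have h4pos : 0 < 4 ^ s := pow_pos (by norm_num) s
  have : 4 ^ (s + 1) = 4 * 4 ^ s := by ring
  omega

lemma gamma_decomp {m S : ℕ} (hmS : Nat.log 4 m < S) :
    γγ m = ∑ s ∈ range S, γb s m := by
  have huniq : ∀ s : ℕ, γb s m ≠ 0 → s = Nat.log 4 m := by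
    intro s hne
    rw [γb] at hne
    by_cases h : 1 ≤ s ∧ 4 ^ s ≤ m ∧ m < 2 * 4 ^ s
    · obtain ⟨h1, h2, h3⟩ := h
      have h4 : m < 4 ^ (s + 1) := lt_trans h3 two_pow_lt
      exact (Nat.log_eq_of_pow_le_of_lt_pow h2 h4).symm
    · rw [if_neg h] at hne; exact absurd rfl hne
  rw [γγ, Finset.sum_eq_single (Nat.log 4 m)
    (fun s _ hne => by
      by_contra hne0
      exact hne (huniq s hne0))
    (fun h => absurd (Finset.mem_range.mpr hmS) h)]

lemma hankel_total (N : ℕ) (x y : ℕ → ℂ) (hx : ∀ j, ‖x j‖ ≤ 1) (hy : ∀ k, ‖y k‖ ≤ 1) :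
    ‖∑ j ∈ range (N + 1), ∑ k ∈ range (N + 1), γγ (j + k) * x j * y k‖ ≤ 128 := by
  set S := 2 * N + 1 with hSdef
  have hdecomp : ∀ j ∈ range (N + 1), ∀ k ∈ range (N + 1),
      γγ (j + k) * x j * y k = ∑ s ∈ range S, γb s (j + k) * x j * y k := by
    intro j hj k hk
    rw [Finset.mem_range] at hj hk
    have hlog : Nat.log 4 (j + k) < S := by
      have := Nat.log_le_self 4 (j + k)
      omega
    rw [gamma_decomp hlog, Finset.sum_mul, Finset.sum_mul]
  rw [Finset.sum_congr rfl fun j hj => Finset.sum_congr rfl fun k hk => hdecomp j hj k hk]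
  rw [Finset.sum_congr rfl fun j (_ : j ∈ range (N + 1)) => Finset.sum_comm, Finset.sum_comm]
  have hgeom : ∑ s ∈ range S, (1 / 2 : ℝ) ^ s ≤ 2 := by
    have h := geom_sum_eq (by norm_num : (1 / 2 : ℝ) ≠ 1) S
    rw [h]
    have hp : (0 : ℝ) < (1 / 2 : ℝ) ^ S := by positivity
    have : ((1 / 2 : ℝ) ^ S - 1) / (1 / 2 - 1) = 2 * (1 - (1 / 2 : ℝ) ^ S) := by ring
    rw [this]
    nlinarith
  calc ‖∑ s ∈ range S, ∑ j ∈ range (N + 1), ∑ k ∈ range (N + 1), γb s (j + k) * x j * y k‖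
      ≤ ∑ s ∈ range S, ‖∑ j ∈ range (N + 1), ∑ k ∈ range (N + 1), γb s (j + k) * x j * y k‖ :=
        norm_sum_le _ _
    _ ≤ ∑ s ∈ range S, 64 * (1 / 2 : ℝ) ^ s :=
        Finset.sum_le_sum fun s _ => blockBound s N x y hx hy
    _ = 64 * ∑ s ∈ range S, (1 / 2 : ℝ) ^ s := by rw [Finset.mul_sum]
    _ ≤ 128 := by nlinarith [hgeom]

lemma amp_nonneg (s : ℕ) : 0 ≤ amp s := by rw [amp]; positivity

lemma norm_γγ {s m : ℕ} (hs1 : 1 ≤ s) (h1 : 4 ^ s ≤ m) (h2 : m < 2 * 4 ^ s) :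
    ‖γγ m‖ = amp s := by
  have hlog : Nat.log 4 m = s := Nat.log_eq_of_pow_le_of_lt_pow h1 (lt_trans h2 two_pow_lt)
  rw [γγ, hlog, γb, if_pos ⟨hs1, h1, h2⟩, norm_mul, Complex.norm_real, Real.norm_eq_abs,
    _root_.abs_of_nonneg (amp_nonneg s), norm_eπ, mul_one]

lemma block_lower {s : ℕ} (hs : 1 ≤ s) :
    1 / (s : ℝ) ≤ ∑ m ∈ Ico (4 ^ s : ℕ) (2 * 4 ^ s), (1 + (m : ℝ)) * ‖γγ m‖ := by
  have hterm : ∀ m ∈ Ico (4 ^ s : ℕ) (2 * 4 ^ s),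
      ((4 ^ s : ℕ) : ℝ) * amp s ≤ (1 + (m : ℝ)) * ‖γγ m‖ := by
    intro m hm
    rw [Finset.mem_Ico] at hm
    rw [norm_γγ hs hm.1 hm.2]
    refine mul_le_mul_of_nonneg_right ?_ (amp_nonneg s)
    have : ((4 ^ s : ℕ) : ℝ) ≤ (m : ℝ) := by exact_mod_cast hm.1
    linarith
  have hcard : (Ico (4 ^ s : ℕ) (2 * 4 ^ s)).card = 4 ^ s := by
    rw [Nat.card_Ico]
    omega
  have hsum : ((4 ^ s : ℕ) : ℝ) * (((4 ^ s : ℕ) : ℝ) * amp s)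
      ≤ ∑ m ∈ Ico (4 ^ s : ℕ) (2 * 4 ^ s), (1 + (m : ℝ)) * ‖γγ m‖ := by
    calc ((4 ^ s : ℕ) : ℝ) * (((4 ^ s : ℕ) : ℝ) * amp s)
        = ∑ _m ∈ Ico (4 ^ s : ℕ) (2 * 4 ^ s), ((4 ^ s : ℕ) : ℝ) * amp s := by
          rw [Finset.sum_const, hcard, nsmul_eq_mul]
      _ ≤ _ := Finset.sum_le_sum hterm
  refine le_trans ?_ hsum
  rw [amp]
  have h16 : ((4 ^ s : ℕ) : ℝ) * ((4 ^ s : ℕ) : ℝ) = (16 : ℝ) ^ s := by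
    push_cast
    rw [← pow_add, ← two_mul, pow_mul]
    norm_num
  have hspos : (0 : ℝ) < (s : ℝ) := by exact_mod_cast hs
  have h16pos : (0 : ℝ) < (16 : ℝ) ^ s := by positivity
  rw [show ((4 ^ s : ℕ) : ℝ) * (((4 ^ s : ℕ) : ℝ) * ((16 : ℝ) ^ s * (s : ℝ))⁻¹)
      = (((4 ^ s : ℕ) : ℝ) * ((4 ^ s : ℕ) : ℝ)) * ((16 : ℝ) ^ s * (s : ℝ))⁻¹ by ring, h16]
  rw [one_div]
  rw [mul_inv]
  rw [← mul_assoc, mul_inv_cancel₀ (ne_of_gt h16pos), one_mul]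

lemma gamma_not_summable : ¬ Summable (fun m : ℕ => (1 + (m : ℝ)) * ‖γγ m‖) := by
  intro h
  have hnonneg : ∀ m : ℕ, 0 ≤ (1 + (m : ℝ)) * ‖γγ m‖ := fun m => by positivity
  have hdisj : ∀ n : ℕ, Set.PairwiseDisjoint ↑(Ico 1 n) (fun s : ℕ => Ico (4 ^ s : ℕ) (2 * 4 ^ s)) := by
    intro n a ha b hb hab
    refine Finset.disjoint_left.mpr fun m hma hmb => ?_
    rw [Finset.mem_Ico] at hma hmb
    rcases lt_or_gt_of_ne hab with hlt | hlt
    · have : 4 ^ (a + 1) ≤ 4 ^ b := Nat.pow_le_pow_right (by norm_num) hlt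
      have := @two_pow_lt a
      omega
    · have : 4 ^ (b + 1) ≤ 4 ^ a := Nat.pow_le_pow_right (by norm_num) hlt
      have := @two_pow_lt b
      omega
  have hsummable : Summable (fun s : ℕ => 1 / (s : ℝ)) := by
    refine summable_of_sum_range_le (c := ∑' m : ℕ, (1 + (m : ℝ)) * ‖γγ m‖)
      (fun n => by positivity) (fun n => ?_)
    calc ∑ s ∈ range n, 1 / (s : ℝ)
        = ∑ s ∈ Ico 1 n, 1 / (s : ℝ) := by
          rw [Finset.range_eq_Ico]
          refine (Finset.sum_subset (Finset.Ico_subset_Ico (by omega) le_rfl) ?_).symm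
          intro s hs hns
          rw [Finset.mem_Ico] at hs hns
          have : s = 0 := by omega
          rw [this]
          norm_num
      _ ≤ ∑ s ∈ Ico 1 n, ∑ m ∈ Ico (4 ^ s : ℕ) (2 * 4 ^ s), (1 + (m : ℝ)) * ‖γγ m‖ :=
          Finset.sum_le_sum fun s hs => block_lower (Finset.mem_Ico.mp hs).1
      _ = ∑ m ∈ (Ico 1 n).biUnion (fun s => Ico (4 ^ s : ℕ) (2 * 4 ^ s)),
            (1 + (m : ℝ)) * ‖γγ m‖ := (Finset.sum_biUnion (hdisj n)).symm
      _ ≤ ∑' m : ℕ, (1 + (m : ℝ)) * ‖γγ m‖ := Summable.sum_le_tsum _ (fun m _ => hnonneg m) h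
  exact Real.not_summable_one_div_natCast hsummable


end

end MazurAux

/-- Negative solution to Mazur's Problem 88: there is a Hankel matrix in `ℓ¹ ⊗̌ ℓ¹`
whose entries do not have a finite sum of moduli, i.e. `∑_k (1+k)|γ_k| = ∞`. -/
theorem mazur_problem88 :
    ∃ γ : ℕ → ℂ, HankelInInj γ ∧ ¬ Summable (fun k : ℕ => (1 + (k : ℝ)) * ‖γ k‖) :=
  ⟨MazurAux.γγ, ⟨128, fun N x y hx hy => MazurAux.hankel_total N x y hx hy⟩,
    MazurAux.gamma_not_summable⟩
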